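/- Let e_0, …, e_{2^n − 1} be the 2^n-th roots of unity. Then for every z on the unit circle, Σ_{j=0}^{2^n−1} |(z^{2^n} − 1)/(2^n (z − e_j))|² = 1. -/

import Mathlib

open Finset Polynomial

/-- Sum of `r`-th powers over all `N`-th roots of unity vanishes when `N ∤ r`. -/
lemma sum_pow_nthRootsFinset_eq_zero {N : ℕ} (hN : 0 < N) {r : ℕ} (hr : ¬ N ∣ r) :
    ∑ x ∈ nthRootsFinset N (1 : ℂ), x ^ r = 0 := by
  obtain ⟨ζ, hζ⟩ : ∃ ζ : ℂ, IsPrimitiveRoot ζ N :=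
    ⟨_, Complex.isPrimitiveRoot_exp N hN.ne'⟩
  have hζ0 : ζ ≠ 0 := hζ.ne_zero hN.ne'
  have hζmem : ζ ∈ nthRootsFinset N (1 : ℂ) := (mem_nthRootsFinset hN (1 : ℂ)).2 hζ.pow_eq_one
  have hreindex : ∑ x ∈ nthRootsFinset N (1 : ℂ), (ζ * x) ^ r = ∑ x ∈ nthRootsFinset N (1 : ℂ), x ^ r := by
    apply Finset.sum_nbij' (i := fun x => ζ * x) (j := fun x => ζ⁻¹ * x)
    · intro a ha
      simpa using mul_mem_nthRootsFinset hζmem ha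
    · intro a ha
      rw [mem_nthRootsFinset hN (1 : ℂ)] at ha ⊢
      rw [mul_pow, inv_pow, hζ.pow_eq_one, inv_one, one_mul, ha]
    · intro a _
      field_simp
    · intro a _
      field_simp
    · intro a _
      rfl
  have hpow : ζ ^ r ≠ 1 := fun h => hr ((hζ.pow_eq_one_iff_dvd r).1 h)
  have key : ζ ^ r * ∑ x ∈ nthRootsFinset N (1 : ℂ), x ^ r = ∑ x ∈ nthRootsFinset N (1 : ℂ), x ^ r := by
    conv_rhs => rw [← hreindex]
    rw [Finset.mul_sum]
    exact Finset.sum_congr rfl fun x _ => (mul_pow ζ x r).symm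
  have h0 : (ζ ^ r - 1) * ∑ x ∈ nthRootsFinset N (1 : ℂ), x ^ r = 0 := by
    linear_combination key
  rcases mul_eq_zero.1 h0 with h | h
  · exact absurd (sub_eq_zero.1 h) hpow
  · exact h

theorem sum_sq_lagrange_roots_of_unity (n : ℕ) (e : ℕ → ℂ)
    (hinj : ∀ i j : ℕ, i < 2 ^ n → j < 2 ^ n → e i = e j → i = j)
    (hroot : ∀ j : ℕ, j < 2 ^ n → (e j) ^ (2 ^ n) = 1)
    (z : ℂ) (hz : ‖z‖ = 1) (hnz : z ^ (2 ^ n) ≠ 1) :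
    ∑ j ∈ Finset.range (2 ^ n),
      ‖(z ^ (2 ^ n) - 1) / ((2 ^ n : ℂ) * (z - e j))‖ ^ 2 = 1 := by
  set N := 2 ^ n with hNdef
  have hN : 0 < N := pow_pos (by norm_num) n
  have hNc : (N : ℂ) ≠ 0 := Nat.cast_ne_zero.2 hN.ne'
  have hz0 : z ≠ 0 := by
    intro h; rw [h] at hz; simp at hz
  have hzconj : (starRingEnd ℂ) z = z⁻¹ := by
    symm
    apply inv_eq_of_mul_eq_one_right
    rw [Complex.mul_conj, Complex.normSq_eq_norm_sq, hz]
    norm_num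
  have he0 : ∀ j, j < N → e j ≠ 0 := by
    intro j hj h
    have h1 := hroot j hj
    rw [h, zero_pow hN.ne'] at h1
    exact zero_ne_one h1
  have heconj : ∀ j, j < N → (starRingEnd ℂ) (e j) = (e j)⁻¹ := by
    intro j hj
    have habs : ‖e j‖ = 1 := by
      have h1 : ‖e j‖ ^ N = 1 := by
        rw [← norm_pow, hroot j hj, norm_one]
      rcases (pow_eq_one_iff_cases).1 h1 with h | h | h
      · omega
      · exact h
      · nlinarith [norm_nonneg (e j), h.1]
    symm
    apply inv_eq_of_mul_eq_one_right
    rw [Complex.mul_conj, Complex.normSq_eq_norm_sq, habs]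
    norm_num
  have hne : ∀ j, j < N → z ≠ e j := by
    intro j hj h
    exact hnz (h ▸ hroot j hj)
  -- the image of `e` is the full set of `N`-th roots of unity
  have himg : (Finset.range N).image e = nthRootsFinset N (1 : ℂ) := by
    apply Finset.eq_of_subset_of_card_le
    · intro x hx
      obtain ⟨j, hj, rfl⟩ := Finset.mem_image.1 hx
      exact (mem_nthRootsFinset hN (1 : ℂ)).2 (hroot j (Finset.mem_range.1 hj))
    · rw [Finset.card_image_of_injOn (fun i hi j hj hij =>
        hinj i j (Finset.mem_range.1 hi) (Finset.mem_range.1 hj) hij),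
        Finset.card_range]
      obtain ⟨ζ, hζ⟩ : ∃ ζ : ℂ, IsPrimitiveRoot ζ N :=
        ⟨_, Complex.isPrimitiveRoot_exp N hN.ne'⟩
      rw [hζ.card_nthRootsFinset]
  have hsumr : ∀ r : ℕ, ¬ N ∣ r → ∑ j ∈ Finset.range N, (e j) ^ r = 0 := by
    intro r hr
    rw [← sum_pow_nthRootsFinset_eq_zero hN hr, ← himg,
      Finset.sum_image (fun i hi j hj hij =>
        hinj i j (Finset.mem_range.1 hi) (Finset.mem_range.1 hj) hij)]
  -- per-term identity
  have hterm : ∀ j, j < N →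
      ((‖(z ^ N - 1) / ((N : ℂ) * (z - e j))‖ ^ 2 : ℝ) : ℂ) =
        (1 / (N : ℂ) ^ 2) * ((∑ k ∈ Finset.range N, (z * (e j)⁻¹) ^ k) *
          (∑ m ∈ Finset.range N, (z⁻¹ * e j) ^ m)) := by
    intro j hj
    have hej0 := he0 j hj
    have hzej := sub_ne_zero.2 (hne j hj)
    have hw1 : z * (e j)⁻¹ ≠ 1 := by
      intro h
      apply hne j hj
      field_simp at h
      exact h
    have hA : ∑ k ∈ Finset.range N, (z * (e j)⁻¹) ^ k =
        (z ^ N - 1) * e j / (z - e j) := by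
      rw [geom_sum_eq hw1, mul_pow, inv_pow, hroot j hj, inv_one, mul_one,
        div_eq_div_iff (sub_ne_zero.2 hw1) hzej]
      field_simp
    have hB : ∑ m ∈ Finset.range N, (z⁻¹ * e j) ^ m =
        (starRingEnd ℂ) (∑ k ∈ Finset.range N, (z * (e j)⁻¹) ^ k) := by
      rw [map_sum]
      apply Finset.sum_congr rfl
      intro k _
      rw [map_pow, map_mul, hzconj, map_inv₀, heconj j hj, inv_inv]
    have hT : (z ^ N - 1) / ((N : ℂ) * (z - e j)) =
        (1 / ((N : ℂ) * e j)) * ∑ k ∈ Finset.range N, (z * (e j)⁻¹) ^ k := by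
      rw [hA]
      field_simp
    rw [Complex.sq_norm, ← Complex.mul_conj, hT, map_mul, ← hB,
      map_div₀, map_one, map_mul, heconj j hj, map_natCast]
    field_simp
  -- main computation over ℂ
  have hmain : ∑ j ∈ Finset.range N,
      ((‖(z ^ N - 1) / ((N : ℂ) * (z - e j))‖ ^ 2 : ℝ) : ℂ) = 1 := by
    rw [Finset.sum_congr rfl (fun j hj => hterm j (Finset.mem_range.1 hj)),
      ← Finset.mul_sum]
    have expand : ∀ j ∈ Finset.range N,
        (∑ k ∈ Finset.range N, (z * (e j)⁻¹) ^ k) *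
          (∑ m ∈ Finset.range N, (z⁻¹ * e j) ^ m) =
        ∑ k ∈ Finset.range N, ∑ m ∈ Finset.range N,
          z ^ k * (z⁻¹) ^ m * ((e j) ^ ((N - 1) * k + m)) := by
      intro j hj
      rw [Finset.sum_mul_sum]
      apply Finset.sum_congr rfl; intro k _
      apply Finset.sum_congr rfl; intro m _
      have hinv : (e j)⁻¹ = (e j) ^ (N - 1) := by
        apply inv_eq_of_mul_eq_one_right
        rw [← pow_succ']
        have hN1 : N - 1 + 1 = N := by omega
        rw [hN1, hroot j (Finset.mem_range.1 hj)]
      rw [mul_pow, mul_pow, hinv, ← pow_mul, pow_add]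
      ring
    rw [Finset.sum_congr rfl expand, Finset.sum_comm]
    have swap2 : ∑ k ∈ Finset.range N, ∑ j ∈ Finset.range N, ∑ m ∈ Finset.range N,
        z ^ k * (z⁻¹) ^ m * ((e j) ^ ((N - 1) * k + m)) =
        ∑ k ∈ Finset.range N, ∑ m ∈ Finset.range N,
          z ^ k * (z⁻¹) ^ m * ∑ j ∈ Finset.range N, (e j) ^ ((N - 1) * k + m) := by
      apply Finset.sum_congr rfl; intro k _
      rw [Finset.sum_comm]
      apply Finset.sum_congr rfl; intro m _
      rw [Finset.mul_sum]
    rw [swap2]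
    have hinner : ∀ k ∈ Finset.range N, ∀ m ∈ Finset.range N,
        ∑ j ∈ Finset.range N, (e j) ^ ((N - 1) * k + m) =
          if m = k then (N : ℂ) else 0 := by
      intro k hk m hm
      rw [Finset.mem_range] at hk hm
      by_cases hkm : m = k
      · subst hkm
        rw [if_pos rfl]
        have : ∀ j ∈ Finset.range N, (e j) ^ ((N - 1) * m + m) = 1 := by
          intro j hj
          have hNm : (N - 1) * m + m = N * m := by
            obtain ⟨p, hp⟩ : ∃ p, N = p + 1 := ⟨N - 1, by omega⟩
            rw [hp, Nat.add_sub_cancel]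
            ring
          rw [hNm, pow_mul, hroot j (Finset.mem_range.1 hj), one_pow]
        rw [Finset.sum_congr rfl this, Finset.sum_const, Finset.card_range,
          nsmul_eq_mul, mul_one]
      · rw [if_neg hkm]
        apply hsumr
        intro ⟨c, hc⟩
        -- (N-1)*k + m = N*c  with k, m < N forces m = k
        have h1 : N * k + m = N * c + k := by
          have hN1 : N - 1 + 1 = N := by omega
          calc N * k + m = ((N - 1) + 1) * k + m := by rw [hN1]
            _ = ((N - 1) * k + m) + k := by ring
            _ = N * c + k := by rw [hc]
        have h2 : (N * k + m) % N = m := by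
          rw [Nat.mul_add_mod]
          exact Nat.mod_eq_of_lt hm
        have h3 : (N * c + k) % N = k := by
          rw [Nat.mul_add_mod]
          exact Nat.mod_eq_of_lt hk
        rw [h1, h3] at h2
        exact hkm h2.symm
    have hfinal : ∀ k ∈ Finset.range N,
        ∑ m ∈ Finset.range N, z ^ k * (z⁻¹) ^ m *
          (∑ j ∈ Finset.range N, (e j) ^ ((N - 1) * k + m)) = (N : ℂ) := by
      intro k hk
      rw [Finset.sum_congr rfl (fun m hm => by rw [hinner k hk m hm])]
      have : ∀ m ∈ Finset.range N,
          z ^ k * (z⁻¹) ^ m * (if m = k then (N : ℂ) else 0) =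
          if m = k then z ^ k * (z⁻¹) ^ m * (N : ℂ) else 0 := by
        intro m _
        split <;> simp
      rw [Finset.sum_congr rfl this, Finset.sum_ite_eq' (Finset.range N) k
        (fun m => z ^ k * (z⁻¹) ^ m * (N : ℂ)), if_pos hk]
      rw [← mul_pow, mul_inv_cancel₀ hz0, one_pow, one_mul]
    rw [Finset.sum_congr rfl hfinal, Finset.sum_const, Finset.card_range,
      nsmul_eq_mul]
    field_simp
  -- conclude over ℝ
  have := hmain
  rw [← Complex.ofReal_sum] at this
  have hre : ∑ j ∈ Finset.range N,
      ‖(z ^ N - 1) / ((N : ℂ) * (z - e j))‖ ^ 2 = 1 := by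
    exact_mod_cast this
  have hcast : ((2 : ℂ) ^ n) = (N : ℂ) := by rw [hNdef]; push_cast; ring
  rw [show ((2 : ℂ) ^ n) = (N : ℂ) from hcast]
  exact hre
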